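/- Let A be a ring and I an injective left A-module. Then I is indecomposable if and only if its endomorphism ring End_A(I) is local; moreover, in that case an endomorphism f of I is a unit if and only if ker(f) = 0. -/

import Mathlib

/-- A module is indecomposable if it is nonzero and is not the direct sum of two nonzero
submodules. -/
def Module.Indecomposable (A : Type*) [Ring A] (M : Type*) [AddCommGroup M]
    [Module A M] : Prop :=
  Nontrivial M ∧ ∀ N N' : Submodule A M, IsCompl N N' → N = ⊥ ∨ N' = ⊥

section Aux

variable {A : Type*} [Ring A] {I : Type*} [AddCommGroup I] [Module A I]

lemma aux_injective_of_isUnit (f : Module.End A I) (hu : IsUnit f) :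
    Function.Injective f := by
  obtain ⟨u, rfl⟩ := hu
  intro x y hxy
  have h2 : ∀ z : I, (↑u⁻¹ : Module.End A I) ((↑u : Module.End A I) z) = z := fun z =>
    show ((↑u⁻¹ * ↑u : Module.End A I)) z = z by rw [u.inv_mul]; rfl
  rw [← h2 x, ← h2 y, hxy]

lemma aux_isUnit_of_ker_eq_bot [Module.Injective A I]
    (hind : Module.Indecomposable A I) (f : Module.End A I)
    (hf : LinearMap.ker f = ⊥) : IsUnit f := by
  have hfinj : Function.Injective f := LinearMap.ker_eq_bot.1 hf
  obtain ⟨h, hh0⟩ := Module.Injective.out (f : I →ₗ[A] I) hfinj (LinearMap.id : I →ₗ[A] I)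
  have hh : ∀ x : I, h (f x) = x := fun x => by simpa using hh0 x
  set e : Module.End A I := f ∘ₗ h with he
  have hidem : ∀ x, e (e x) = e x := by
    intro x
    show f (h (f (h x))) = f (h x)
    rw [hh (h x)]
  have hcompl : IsCompl (LinearMap.ker e) (LinearMap.range e) := by
    constructor
    · rw [disjoint_iff]
      refine eq_bot_iff.2 fun x hx => ?_
      obtain ⟨hx1, y, rfl⟩ := Submodule.mem_inf.1 hx
      have : e (e y) = 0 := hx1
      rw [hidem] at this
      simpa using this
    · rw [codisjoint_iff]
      refine eq_top_iff.2 fun x _ => ?_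
      refine Submodule.mem_sup.2 ⟨x - e x, ?_, e x, ⟨x, rfl⟩, by abel⟩
      show e (x - e x) = 0
      rw [map_sub, hidem x, sub_self]
  rcases hind.2 _ _ hcompl with hker | hrange
  · -- e injective, hence e = 1, so f is a unit
    have heinj : Function.Injective e := LinearMap.ker_eq_bot.1 hker
    have heid : ∀ x, e x = x := fun x => heinj (hidem x)
    refine ⟨⟨f, h, ?_, ?_⟩, rfl⟩
    · exact LinearMap.ext fun x => heid x
    · exact LinearMap.ext fun x => hh x
  · -- range e = ⊥ forces f = 0, contradiction
    exfalso
    have hf0 : ∀ x : I, f x = 0 := by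
      intro x
      have : e (f x) ∈ LinearMap.range e := ⟨f x, rfl⟩
      rw [hrange, Submodule.mem_bot] at this
      have he2 : e (f x) = f x := by show f (h (f x)) = f x; rw [hh x]
      rw [← he2, this]
    haveI := hind.1
    obtain ⟨x, hx⟩ := exists_ne (0 : I)
    exact hx (hfinj (by rw [hf0 x, map_zero]))

/-- An injective indecomposable module is uniform. -/
lemma aux_uniform [Module.Injective A I] (hind : Module.Indecomposable A I)
    {N N' : Submodule A I} (hN : N ≠ ⊥) (hN' : N' ≠ ⊥) : N ⊓ N' ≠ ⊥ := by
  intro hdisj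
  -- maximal essential extension of N
  set S : Set (Submodule A I) :=
    {E | N ≤ E ∧ ∀ x ∈ E, x ≠ (0 : I) → ∃ a : A, a • x ∈ N ∧ a • x ≠ 0} with hS
  have hNS : N ∈ S := ⟨le_rfl, fun x hx hx0 => ⟨1, by simpa using hx, by simpa using hx0⟩⟩
  obtain ⟨M, hNM, hMS, hMmax⟩ := zorn_le_nonempty₀ S (fun c hcS hc y hy => by
    refine ⟨sSup c, ⟨?_, ?_⟩, fun z hz => le_sSup hz⟩
    · exact le_trans (hcS hy).1 (le_sSup hy)
    · intro x hx hx0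
      obtain ⟨E, hEc, hxE⟩ := (Submodule.mem_sSup_of_directed ⟨y, hy⟩ hc.directedOn).1 hx
      exact (hcS hEc).2 x hxE hx0) N hNS
  -- N' is disjoint from M
  have hN'M : N' ⊓ M = ⊥ := by
    refine eq_bot_iff.2 fun x hx => ?_
    obtain ⟨hx1, hx2⟩ := Submodule.mem_inf.1 hx
    by_contra hx0
    rw [Submodule.mem_bot] at hx0
    obtain ⟨a, haN, ha0⟩ := hMS.2 x hx2 hx0
    exact ha0 (by
      have : a • x ∈ N ⊓ N' := Submodule.mem_inf.2 ⟨haN, Submodule.smul_mem _ _ hx1⟩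
      rwa [hdisj, Submodule.mem_bot] at this)
  -- maximal complement of M containing N'
  set T : Set (Submodule A I) := {C | C ⊓ M = ⊥} with hT
  obtain ⟨C, hN'C, hCT, hCmax⟩ := zorn_le_nonempty₀ T (fun c hcT hc y hy => by
    refine ⟨sSup c, ?_, fun z hz => le_sSup hz⟩
    refine eq_bot_iff.2 fun x hx => ?_
    obtain ⟨hx1, hx2⟩ := Submodule.mem_inf.1 hx
    obtain ⟨E, hEc, hxE⟩ := (Submodule.mem_sSup_of_directed ⟨y, hy⟩ hc.directedOn).1 hx1
    have : x ∈ E ⊓ M := Submodule.mem_inf.2 ⟨hxE, hx2⟩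
    rwa [hcT hEc] at this) N' hN'M
  set q : I →ₗ[A] I ⧸ C := C.mkQ with hqdef
  -- image of M is essential in I ⧸ C
  have hess : ∀ x : I ⧸ C, x ≠ 0 → ∃ (a : A) (m : I), m ∈ M ∧ q m = a • x ∧ q m ≠ 0 := by
    intro x hx0
    obtain ⟨y, rfl⟩ := C.mkQ_surjective x
    have hyC : y ∉ C := by
      intro hyC
      exact hx0 ((Submodule.Quotient.mk_eq_zero C).2 hyC)
    set D : Submodule A I := C ⊔ Submodule.span A {y} with hD
    have hDne : D ⊓ M ≠ ⊥ := by
      intro hDM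
      have hCD : C ≤ D := le_sup_left
      have := hCmax hDM hCD
      exact hyC (this (Submodule.mem_sup_right (Submodule.mem_span_singleton_self y)))
    obtain ⟨m, hmDM, hm0⟩ := Submodule.exists_mem_ne_zero_of_ne_bot hDne
    obtain ⟨hmD, hmM⟩ := Submodule.mem_inf.1 hmDM
    obtain ⟨cc, hcc, z, hz, hczm⟩ := Submodule.mem_sup.1 hmD
    obtain ⟨a, rfl⟩ := Submodule.mem_span_singleton.1 hz
    refine ⟨a, m, hmM, ?_, ?_⟩
    · rw [← hczm]
      show Submodule.Quotient.mk (cc + a • y) = a • Submodule.Quotient.mk y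
      rw [Submodule.Quotient.mk_add, (Submodule.Quotient.mk_eq_zero C).2 hcc, zero_add,
        Submodule.Quotient.mk_smul]
    · intro hqm
      have : m ∈ C := (Submodule.Quotient.mk_eq_zero C).1 hqm
      have : m ∈ C ⊓ M := Submodule.mem_inf.2 ⟨this, hmM⟩
      rw [hCT, Submodule.mem_bot] at this
      exact hm0 this
  -- extend the inclusion M ↪ I along M ↪ I ⧸ C
  have hinj : Function.Injective ((q ∘ₗ M.subtype : ↥M →ₗ[A] I ⧸ C)) := by
    intro a b hab
    have : q ((a : I) - (b : I)) = 0 := by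
      rw [map_sub]
      rw [sub_eq_zero]
      exact hab
    have hmem : (a : I) - (b : I) ∈ C := (Submodule.Quotient.mk_eq_zero C).1 this
    have : (a : I) - (b : I) ∈ C ⊓ M :=
      Submodule.mem_inf.2 ⟨hmem, Submodule.sub_mem _ a.2 b.2⟩
    rw [hCT, Submodule.mem_bot, sub_eq_zero] at this
    exact Subtype.ext this
  obtain ⟨ψ, hψ⟩ := Module.Injective.out (q ∘ₗ M.subtype) hinj M.subtype
  -- hψ : ∀ m : M, ψ (q m) = m
  have hψM : ∀ m ∈ M, ψ (q m) = m := fun m hm => hψ ⟨m, hm⟩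
  have hψinj : Function.Injective ψ := by
    rw [← LinearMap.ker_eq_bot]
    refine eq_bot_iff.2 fun x hx => ?_
    rw [Submodule.mem_bot]
    by_contra hx0
    obtain ⟨a, m, hmM, hqm, hqm0⟩ := hess x hx0
    have hm : ψ (q m) = m := hψM m hmM
    rw [hqm, map_smul] at hm
    have hψx : ψ x = 0 := hx
    rw [hψx, smul_zero] at hm
    exact hqm0 (by rw [← hm, map_zero])
  set π : Module.End A I := ψ ∘ₗ q with hπdef
  have hπM : ∀ m ∈ M, π m = m := fun m hm => hψM m hm
  -- range π is an essential extension of N containing M, so equals M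
  have hrange : LinearMap.range π = M := by
    have h1 : M ≤ LinearMap.range π := fun m hm => ⟨m, hπM m hm⟩
    have h2 : LinearMap.range π ∈ S := by
      constructor
      · exact le_trans hNM h1
      · intro y hy hy0
        obtain ⟨z, rfl⟩ := hy
        have hqz0 : q z ≠ 0 := by
          intro h
          exact hy0 (by show ψ (q z) = 0; rw [h, map_zero])
        obtain ⟨a, m, hmM, hqm, hqm0⟩ := hess (q z) hqz0
        have ham : a • π z = m := by
          show a • ψ (q z) = m
          rw [← map_smul, ← hqm, hψM m hmM]
        have hm0 : m ≠ 0 := by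
          intro h
          rw [h] at hqm0
          exact hqm0 (map_zero _)
        obtain ⟨b, hbN, hb0⟩ := hMS.2 m hmM hm0
        refine ⟨b * a, ?_, ?_⟩
        · rw [mul_smul, ham]; exact hbN
        · rw [mul_smul, ham]; exact hb0
    exact le_antisymm (hMmax h2 h1) h1
  have hker : LinearMap.ker π = C := by
    refine le_antisymm (fun x hx => ?_) (fun x hx => ?_)
    · have : ψ (q x) = 0 := hx
      have hq0 : q x = 0 := hψinj (by rw [this, map_zero])
      exact (Submodule.Quotient.mk_eq_zero C).1 hq0
    · show ψ (q x) = 0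
      rw [show q x = 0 from (Submodule.Quotient.mk_eq_zero C).2 hx, map_zero]
  have hcompl : IsCompl M C := by
    constructor
    · rw [disjoint_iff, inf_comm]
      exact hCT
    · rw [codisjoint_iff]
      refine eq_top_iff.2 fun x _ => ?_
      have hπx : π x ∈ M := by rw [← hrange]; exact ⟨x, rfl⟩
      have hxx : x - π x ∈ C := by
        rw [← hker]
        show π (x - π x) = 0
        rw [map_sub, hπM (π x) hπx, sub_self]
      exact Submodule.mem_sup.2 ⟨π x, hπx, x - π x, hxx, by abel⟩
  rcases hind.2 M C hcompl with h | h
  · exact hN (eq_bot_iff.2 (h ▸ hNM))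
  · exact hN' (eq_bot_iff.2 (h ▸ hN'C))

end Aux

/-- Let `A` be a ring and `I` an injective left `A`-module.  Then `I` is indecomposable
if and only if its endomorphism ring is local; moreover, in that case an endomorphism
`f` of `I` is a unit if and only if `ker f = 0`. -/
theorem indecomposable_injective_iff_isLocalRing_end
    {A : Type*} [Ring A] (I : Type*) [AddCommGroup I] [Module A I]
    [Module.Injective A I] :
    (Module.Indecomposable A I ↔ IsLocalRing (Module.End A I)) ∧
    (Module.Indecomposable A I →
      ∀ f : Module.End A I, IsUnit f ↔ LinearMap.ker f = ⊥) := by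
  have key : Module.Indecomposable A I →
      ∀ f : Module.End A I, (IsUnit f ↔ LinearMap.ker f = ⊥) := by
    intro hind f
    constructor
    · intro hu
      exact LinearMap.ker_eq_bot.2 (aux_injective_of_isUnit f hu)
    · exact aux_isUnit_of_ker_eq_bot hind f
  refine ⟨⟨?_, ?_⟩, key⟩
  · -- indecomposable → local
    intro hind
    haveI := hind.1
    haveI : Nontrivial (Module.End A I) := by
      refine ⟨0, 1, fun h => ?_⟩
      obtain ⟨x, hx⟩ := exists_ne (0 : I)
      have : (0 : Module.End A I) x = (1 : Module.End A I) x := by rw [h]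
      simp only [LinearMap.zero_apply, Module.End.one_apply] at this
      exact hx this.symm
    refine ⟨fun {f g} hfg => ?_⟩
    rw [or_iff_not_imp_left]
    intro hnf
    by_contra hng
    have hkf : LinearMap.ker f ≠ ⊥ := fun h => hnf ((key hind f).2 h)
    have hkg : LinearMap.ker g ≠ ⊥ := fun h => hng ((key hind g).2 h)
    refine aux_uniform hind hkf hkg ?_
    refine eq_bot_iff.2 fun x hx => ?_
    obtain ⟨h1, h2⟩ := Submodule.mem_inf.1 hx
    have hfx : f x = 0 := h1
    have hgx : g x = 0 := h2
    have : x = (f + g) x := by rw [hfg]; rfl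
    rw [LinearMap.add_apply, hfx, hgx, add_zero] at this
    rw [Submodule.mem_bot, this]
  · -- local → indecomposable
    intro hloc
    haveI := hloc
    constructor
    · by_contra hns
      rw [not_nontrivial_iff_subsingleton] at hns
      have : (0 : Module.End A I) = 1 := LinearMap.ext fun x => Subsingleton.elim _ _
      exact zero_ne_one (α := Module.End A I) this
    · intro N N' hcompl
      set e : Module.End A I := N.subtype ∘ₗ N.projectionOnto N' hcompl with he
      have heN : ∀ x ∈ N, e x = x := fun x hx =>
        congrArg Subtype.val (Submodule.linearProjOfIsCompl_apply_left hcompl ⟨x, hx⟩)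
      have heN' : ∀ x ∈ N', e x = 0 := fun x hx => by
        have h0 := Submodule.projectionOnto_apply_of_mem_right hcompl hx
        have : e x = ((N.projectionOnto N' hcompl) x : I) := rfl
        rw [this, h0]
        rfl
      rcases IsLocalRing.isUnit_or_isUnit_of_add_one
        (show e + (1 - e) = (1 : Module.End A I) by abel) with hu | hu
      · right
        have hinj := aux_injective_of_isUnit e hu
        refine eq_bot_iff.2 fun x hx => ?_
        rw [Submodule.mem_bot]
        exact hinj (by rw [heN' x hx, map_zero])
      · left
        have hinj := aux_injective_of_isUnit (1 - e) hu
        refine eq_bot_iff.2 fun x hx => ?_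
        rw [Submodule.mem_bot]
        refine hinj ?_
        rw [map_zero]
        show x - e x = 0
        rw [heN x hx, sub_self]
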